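/- A rational function f ∈ F(x,y) satisfies f = τ_x(g) − g + τ_y(h) − h for some g, h ∈ F(x,y) if and only if Tr_{F(x,y)/F(x^m,y^m)}(f) = 0. -/

import Mathlib

/-- `F(x,y)`, realized as `RatFunc (RatFunc F)` (the inner variable is `x`, the outer is `y`). -/
noncomputable abbrev RatFunc2 (F : Type*) [Field F] : Type _ := RatFunc (RatFunc F)

/-- The element `x` of `F(x,y)`. -/
noncomputable abbrev RatFunc2.x (F : Type*) [Field F] : RatFunc2 F := RatFunc.C RatFunc.X

/-- The element `y` of `F(x,y)`. -/
noncomputable abbrev RatFunc2.y (F : Type*) [Field F] : RatFunc2 F := RatFunc.X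

open IntermediateField Polynomial Finset Module

lemma RatFunc2.algebraMap_eq (F : Type*) [Field F] (a : F) :
    algebraMap F (RatFunc2 F) a = RatFunc.C (RatFunc.C a) := by
  rw [RatFunc.algebraMap_apply, Polynomial.algebraMap_apply, RatFunc.algebraMap_eq_C]
  simp [RatFunc.algebraMap_C]

lemma RatFunc2.adjoin_xy (F : Type*) [Field F] :
    IntermediateField.adjoin F {RatFunc2.x F, RatFunc2.y F} = ⊤ := by
  set S := IntermediateField.adjoin F {RatFunc2.x F, RatFunc2.y F} with hS
  have hx : RatFunc2.x F ∈ S := subset_adjoin _ _ (by simp)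
  have hy : RatFunc2.y F ∈ S := subset_adjoin _ _ (by simp)
  have hCp : ∀ p : Polynomial F, RatFunc.C (algebraMap (Polynomial F) (RatFunc F) p) ∈ S := by
    intro p
    induction p using Polynomial.induction_on' with
    | add p q hp hq => rw [map_add, map_add]; exact add_mem hp hq
    | monomial n a =>
      rw [← Polynomial.C_mul_X_pow_eq_monomial, map_mul, map_pow, map_mul, map_pow,
        RatFunc.algebraMap_C, RatFunc.algebraMap_X, ← RatFunc2.algebraMap_eq]
      exact mul_mem (IntermediateField.algebraMap_mem S a) (pow_mem hx n)
  have hC : ∀ r : RatFunc F, RatFunc.C r ∈ S := by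
    intro r
    rw [← RatFunc.num_div_denom r, map_div₀]
    exact div_mem (hCp _) (hCp _)
  have hP : ∀ p : Polynomial (RatFunc F), algebraMap _ (RatFunc2 F) p ∈ S := by
    intro p
    induction p using Polynomial.induction_on' with
    | add p q hp hq => rw [map_add]; exact add_mem hp hq
    | monomial n a =>
      rw [← Polynomial.C_mul_X_pow_eq_monomial, map_mul, map_pow,
        RatFunc.algebraMap_C, RatFunc.algebraMap_X]
      exact mul_mem (hC a) (pow_mem hy n)
  rw [eq_top_iff]
  intro z _
  rw [← RatFunc.num_div_denom z]
  exact div_mem (hP _) (hP _)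

lemma RatFunc2.algEquiv_ext {F : Type*} [Field F] {σ σ' : RatFunc2 F ≃ₐ[F] RatFunc2 F}
    (hx : σ (RatFunc2.x F) = σ' (RatFunc2.x F))
    (hy : σ (RatFunc2.y F) = σ' (RatFunc2.y F)) : σ = σ' := by
  apply AlgEquiv.ext
  intro z
  have hz : z ∈ IntermediateField.adjoin F {RatFunc2.x F, RatFunc2.y F} := by
    rw [RatFunc2.adjoin_xy]; trivial
  induction hz using IntermediateField.adjoin_induction with
  | mem t ht => rcases ht with h | h <;> subst h <;> assumption
  | algebraMap a => simp
  | add a b _ _ ha hb => simp [ha, hb]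
  | inv a _ ha => simp [map_inv₀, ha]
  | mul a b _ _ ha hb => simp [ha, hb]

lemma sum_shift {F L : Type*} [Field F] [Field L] [Algebra F L] {m : ℕ}
    (σ : L ≃ₐ[F] L) (hσ : σ ^ m = 1) (z : L) :
    ∑ i ∈ range m, (σ ^ (i + 1)) z = ∑ i ∈ range m, (σ ^ i) z := by
  have h1 := Finset.sum_range_succ' (fun i => (σ ^ i) z) m
  have h2 := Finset.sum_range_succ (fun i => (σ ^ i) z) m
  simp only [pow_zero, AlgEquiv.one_apply, hσ] at h1 h2
  exact add_right_cancel (h1.symm.trans h2)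

lemma hilbert_add {F L : Type*} [Field F] [Field L] [Algebra F L] [CharZero L] {m : ℕ}
    (hm : 0 < m) (σ : L ≃ₐ[F] L) (a : L) (ha : ∑ i ∈ range m, (σ ^ i) a = 0) :
    ∃ b : L, a = σ b - b ∧
      ∀ τ : L ≃ₐ[F] L, τ * σ = σ * τ → τ a = a → τ b = b := by
  have hmL : (m : L) ≠ 0 := Nat.cast_ne_zero.mpr hm.ne'
  set A : ℕ → L := fun i => ∑ j ∈ range i, (σ ^ j) a with hA
  have hσA : ∀ i, σ (A i) = A (i + 1) - a := by
    intro i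
    have : σ (A i) = ∑ j ∈ range i, (σ ^ (j + 1)) a := by
      rw [hA, map_sum]
      exact Finset.sum_congr rfl fun j _ => by rw [pow_succ', AlgEquiv.mul_apply]
    rw [this]
    show _ = (∑ j ∈ range (i + 1), (σ ^ j) a) - a
    rw [Finset.sum_range_succ' (fun j => (σ ^ j) a) i]
    simp
  set B : L := ∑ i ∈ range m, A i with hB
  have hσB : σ B = B - (m : L) * a := by
    rw [hB, map_sum]
    have h1 : ∑ i ∈ range m, σ (A i) = ∑ i ∈ range m, (A (i + 1) - a) :=
      Finset.sum_congr rfl fun i _ => hσA i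
    rw [h1, Finset.sum_sub_distrib, Finset.sum_const, card_range]
    have h2 : ∑ i ∈ range m, A (i + 1) = ∑ i ∈ range m, A i := by
      have e1 := Finset.sum_range_succ' A m
      have e2 := Finset.sum_range_succ A m
      have hAm : A m = 0 := ha
      have hA0 : A 0 = 0 := by simp [hA]
      rw [hAm] at e2
      rw [hA0] at e1
      simpa using e1.symm.trans e2
    rw [h2, nsmul_eq_mul]
  refine ⟨-((m : L)⁻¹ * B), ?_, ?_⟩
  · have hσb : σ (-((m : L)⁻¹ * B)) = -((m : L)⁻¹ * σ B) := by
      rw [map_neg, map_mul, map_inv₀, map_natCast]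
    rw [hσb, hσB]
    field_simp
    ring
  · intro τ hcomm hτa
    have hτpow : ∀ j : ℕ, τ ((σ ^ j) a) = (σ ^ j) a := by
      intro j
      have hc : τ * σ ^ j = σ ^ j * τ := (Commute.pow_right hcomm j)
      calc τ ((σ ^ j) a) = (τ * σ ^ j) a := rfl
        _ = (σ ^ j * τ) a := by rw [hc]
        _ = (σ ^ j) (τ a) := rfl
        _ = (σ ^ j) a := by rw [hτa]
    have hτB : τ B = B := by
      rw [hB, map_sum]
      refine Finset.sum_congr rfl fun i _ => ?_
      rw [hA, map_sum]
      exact Finset.sum_congr rfl fun j _ => hτpow j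
    rw [map_neg, map_mul, map_inv₀, map_natCast, hτB]

set_option maxHeartbeats 2000000 in
/-- Let `F` be an algebraically closed field of characteristic zero, `q ∈ F` a primitive
`m`-th root of unity, and `τ_x, τ_y` the `F`-automorphisms of `F(x,y)` with
`τ_x(x) = q·x`, `τ_x(y) = y`, `τ_y(x) = x`, `τ_y(y) = q·y`.  Then `f ∈ F(x,y)` satisfies
`f = τ_x(g) - g + τ_y(h) - h` for some `g, h ∈ F(x,y)` iff
`Tr_{F(x,y)/F(x^m,y^m)}(f) = 0`. -/
theorem qshift_bivariate_summable_iff_trace_eq_zero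
    (F : Type*) [Field F] [IsAlgClosed F] [CharZero F]
    (m : ℕ) (hm : 0 < m) (q : F) (hq : IsPrimitiveRoot q m)
    (τx τy : RatFunc2 F ≃ₐ[F] RatFunc2 F)
    (hτxx : τx (RatFunc2.x F) = RatFunc.C (RatFunc.C q) * RatFunc2.x F)
    (hτxy : τx (RatFunc2.y F) = RatFunc2.y F)
    (hτyx : τy (RatFunc2.x F) = RatFunc2.x F)
    (hτyy : τy (RatFunc2.y F) = RatFunc.C (RatFunc.C q) * RatFunc2.y F)
    (f : RatFunc2 F) :
    (∃ g h : RatFunc2 F, f = τx g - g + τy h - h)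
      ↔ Algebra.trace
          (IntermediateField.adjoin F {RatFunc2.x F ^ m, RatFunc2.y F ^ m})
          (RatFunc2 F) f = 0 := by
  haveI : CharZero (RatFunc2 F) :=
    charZero_of_injective_algebraMap (algebraMap F (RatFunc2 F)).injective
  set X := RatFunc2.x F with hX
  set Y := RatFunc2.y F with hY
  rw [← RatFunc2.algebraMap_eq] at hτxx hτyy
  set K := IntermediateField.adjoin F {X ^ m, Y ^ m} with hK
  -- basic power formulas
  have hτxpowx : ∀ n : ℕ, (τx ^ n) X = algebraMap F (RatFunc2 F) (q ^ n) * X := by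
    intro n
    induction n with
    | zero => simp
    | succ n ih =>
      rw [pow_succ, AlgEquiv.mul_apply, hτxx, map_mul, ih, AlgEquiv.commutes, map_pow, map_pow]
      ring
  have hτxpowy : ∀ n : ℕ, (τx ^ n) Y = Y := by
    intro n
    induction n with
    | zero => simp
    | succ n ih => rw [pow_succ, AlgEquiv.mul_apply, hτxy, ih]
  have hτypowy : ∀ n : ℕ, (τy ^ n) Y = algebraMap F (RatFunc2 F) (q ^ n) * Y := by
    intro n
    induction n with
    | zero => simp
    | succ n ih =>
      rw [pow_succ, AlgEquiv.mul_apply, hτyy, map_mul, ih, AlgEquiv.commutes, map_pow, map_pow]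
      ring
  have hτypowx : ∀ n : ℕ, (τy ^ n) X = X := by
    intro n
    induction n with
    | zero => simp
    | succ n ih => rw [pow_succ, AlgEquiv.mul_apply, hτyx, ih]
  have hτxm : τx ^ m = 1 := by
    apply RatFunc2.algEquiv_ext (F := F)
    · rw [hτxpowx, hq.pow_eq_one, map_one, one_mul, AlgEquiv.one_apply]
    · rw [hτxpowy, AlgEquiv.one_apply]
  have hτym : τy ^ m = 1 := by
    apply RatFunc2.algEquiv_ext (F := F)
    · rw [hτypowx, AlgEquiv.one_apply]
    · rw [hτypowy, hq.pow_eq_one, map_one, one_mul, AlgEquiv.one_apply]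
  have hcomm : τy * τx = τx * τy := by
    apply RatFunc2.algEquiv_ext (F := F)
    · rw [← hX]; simp only [AlgEquiv.mul_apply, hτxx, hτyx, map_mul, AlgEquiv.commutes]
    · rw [← hY]; simp only [AlgEquiv.mul_apply, hτxy, hτyy, map_mul, AlgEquiv.commutes, hτxy]
  -- τx and τy fix K pointwise
  have hfix : ∀ τ : (RatFunc2 F) ≃ₐ[F] (RatFunc2 F), τ (X ^ m) = X ^ m → τ (Y ^ m) = Y ^ m →
      ∀ z ∈ K, τ z = z := by
    intro τ h1 h2 z hz
    induction hz using IntermediateField.adjoin_induction with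
    | mem t ht => rcases ht with h | h <;> subst h <;> assumption
    | algebraMap a => simp
    | add a b _ _ ha hb => simp [ha, hb]
    | inv a _ ha => simp [map_inv₀, ha]
    | mul a b _ _ ha hb => simp [ha, hb]
  have hfixx : τx (X ^ m) = X ^ m := by
    rw [map_pow, hτxx, mul_pow, ← map_pow, hq.pow_eq_one, map_one, one_mul]
  have hfixy : τx (Y ^ m) = Y ^ m := by rw [map_pow, hτxy]
  have hfixx' : τy (X ^ m) = X ^ m := by rw [map_pow, hτyx]
  have hfixy' : τy (Y ^ m) = Y ^ m := by
    rw [map_pow, hτyy, mul_pow, ← map_pow, hq.pow_eq_one, map_one, one_mul]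
  -- K-algebra versions
  let τx' : (RatFunc2 F) ≃ₐ[K] (RatFunc2 F) := AlgEquiv.ofRingEquiv (f := τx.toRingEquiv)
    (fun c => hfix τx hfixx hfixy _ c.2)
  let τy' : (RatFunc2 F) ≃ₐ[K] (RatFunc2 F) := AlgEquiv.ofRingEquiv (f := τy.toRingEquiv)
    (fun c => hfix τy hfixx' hfixy' _ c.2)
  have hcoex : ∀ (n : ℕ) (z : (RatFunc2 F)), (τx' ^ n) z = (τx ^ n) z := by
    intro n
    induction n with
    | zero => intro z; rfl
    | succ n ih => intro z; rw [pow_succ, pow_succ, AlgEquiv.mul_apply, AlgEquiv.mul_apply, ih]; rfl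
  have hcoey : ∀ (n : ℕ) (z : (RatFunc2 F)), (τy' ^ n) z = (τy ^ n) z := by
    intro n
    induction n with
    | zero => intro z; rfl
    | succ n ih => intro z; rw [pow_succ, pow_succ, AlgEquiv.mul_apply, AlgEquiv.mul_apply, ih]; rfl
  -- finite dimensionality and degree bound
  have hXK : X ^ m ∈ K := subset_adjoin _ _ (by simp)
  have hYK : Y ^ m ∈ K := subset_adjoin _ _ (by simp)
  have hintx : IsIntegral K X := by
    refine ⟨Polynomial.X ^ m - Polynomial.C (⟨X ^ m, hXK⟩ : K),
      Polynomial.monic_X_pow_sub_C _ hm.ne', ?_⟩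
    simp [IntermediateField.algebraMap_apply]
  have hr1 : finrank K K⟮X⟯ ≤ m := by
    rw [IntermediateField.adjoin.finrank hintx]
    have hd := minpoly.degree_le_of_ne_zero K X
      (p := Polynomial.X ^ m - Polynomial.C (⟨X ^ m, hXK⟩ : K))
      ((Polynomial.monic_X_pow_sub_C _ hm.ne').ne_zero)
      (by simp [IntermediateField.algebraMap_apply])
    have := Polynomial.natDegree_le_natDegree hd
    rwa [Polynomial.natDegree_X_pow_sub_C] at this
  haveI hfd1 : FiniteDimensional K K⟮X⟯ := IntermediateField.adjoin.finiteDimensional hintx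
  have hYE1 : Y ^ m ∈ K⟮X⟯ := K⟮X⟯.algebraMap_mem (⟨Y ^ m, hYK⟩ : K)
  have hinty : IsIntegral K⟮X⟯ Y := by
    refine ⟨Polynomial.X ^ m - Polynomial.C (⟨Y ^ m, hYE1⟩ : K⟮X⟯),
      Polynomial.monic_X_pow_sub_C _ hm.ne', ?_⟩
    simp [IntermediateField.algebraMap_apply]
  have hr2 : finrank K⟮X⟯ K⟮X⟯⟮Y⟯ ≤ m := by
    rw [IntermediateField.adjoin.finrank hinty]
    have hd := minpoly.degree_le_of_ne_zero K⟮X⟯ Y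
      (p := Polynomial.X ^ m - Polynomial.C (⟨Y ^ m, hYE1⟩ : K⟮X⟯))
      ((Polynomial.monic_X_pow_sub_C _ hm.ne').ne_zero)
      (by simp [IntermediateField.algebraMap_apply])
    have := Polynomial.natDegree_le_natDegree hd
    rwa [Polynomial.natDegree_X_pow_sub_C] at this
  haveI hfd2 : FiniteDimensional K⟮X⟯ K⟮X⟯⟮Y⟯ := IntermediateField.adjoin.finiteDimensional hinty
  have htop2 : K⟮X⟯⟮Y⟯ = ⊤ := by
    have hKxy : IntermediateField.adjoin K {X, Y} = ⊤ :=
      IntermediateField.adjoin_eq_top_of_adjoin_eq_top (F := F) (RatFunc2.adjoin_xy F)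
    apply IntermediateField.restrictScalars_injective K
    rw [IntermediateField.restrictScalars_top, IntermediateField.adjoin_simple_adjoin_simple]
    exact hKxy
  haveI : FiniteDimensional K⟮X⟯ (RatFunc2 F) := by
    haveI : FiniteDimensional K⟮X⟯ (⊤ : IntermediateField K⟮X⟯ (RatFunc2 F)) := htop2 ▸ hfd2
    exact (IntermediateField.topEquiv (F := K⟮X⟯) (E := (RatFunc2 F))).toLinearEquiv.finiteDimensional
  have hr2' : finrank K⟮X⟯ (RatFunc2 F) ≤ m := by
    rw [← (IntermediateField.topEquiv (F := K⟮X⟯) (E := (RatFunc2 F))).toLinearEquiv.finrank_eq, ← htop2]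
    exact hr2
  haveI : FiniteDimensional K (RatFunc2 F) := FiniteDimensional.trans K K⟮X⟯ (RatFunc2 F)
  have hfrle : finrank K (RatFunc2 F) ≤ m * m := by
    calc finrank K (RatFunc2 F) = finrank K K⟮X⟯ * finrank K⟮X⟯ (RatFunc2 F) :=
          (Module.finrank_mul_finrank K K⟮X⟯ (RatFunc2 F)).symm
      _ ≤ m * m := Nat.mul_le_mul hr1 hr2'
  -- the Galois group
  set e : Fin m × Fin m → ((RatFunc2 F) ≃ₐ[K] (RatFunc2 F)) := fun p => τx' ^ (p.1 : ℕ) * τy' ^ (p.2 : ℕ) with hedef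
  have he : ∀ (p : Fin m × Fin m) (z : (RatFunc2 F)), e p z = (τx ^ (p.1 : ℕ)) ((τy ^ (p.2 : ℕ)) z) := by
    intro p z
    show (τx' ^ (p.1 : ℕ)) ((τy' ^ (p.2 : ℕ)) z) = _
    rw [hcoey, hcoex]
  have hXne : X ≠ 0 := by
    rw [hX]
    exact (map_ne_zero_iff _ (RingHom.injective _)).mpr RatFunc.X_ne_zero
  have hYne : Y ≠ 0 := by rw [hY]; exact RatFunc.X_ne_zero
  have hinj : Function.Injective e := by
    rintro ⟨i, j⟩ ⟨i', j'⟩ hee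
    have hXe := congrArg (fun σ : (RatFunc2 F) ≃ₐ[K] (RatFunc2 F) => σ X) hee
    have hYe := congrArg (fun σ : (RatFunc2 F) ≃ₐ[K] (RatFunc2 F) => σ Y) hee
    simp only [he] at hXe hYe
    simp only [hτypowx, hτxpowx] at hXe
    simp only [hτypowy, map_mul, AlgEquiv.commutes, hτxpowy] at hYe
    have hi : (i : ℕ) = (i' : ℕ) :=
      hq.pow_inj i.2 i'.2 ((algebraMap F (RatFunc2 F)).injective (mul_right_cancel₀ hXne hXe))
    have hj : (j : ℕ) = (j' : ℕ) :=
      hq.pow_inj j.2 j'.2 ((algebraMap F (RatFunc2 F)).injective (mul_right_cancel₀ hYne hYe))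
    exact Prod.ext (Fin.ext hi) (Fin.ext hj)
  have hcard_le : Fintype.card ((RatFunc2 F) ≃ₐ[K] (RatFunc2 F)) ≤ finrank K (RatFunc2 F) := by
    calc Fintype.card ((RatFunc2 F) ≃ₐ[K] (RatFunc2 F)) = Fintype.card ((RatFunc2 F) →ₐ[K] (RatFunc2 F)) :=
          Fintype.card_congr (Algebra.IsAlgebraic.algEquivEquivAlgHom K (RatFunc2 F)).toEquiv
      _ ≤ finrank (RatFunc2 F) ((RatFunc2 F) →ₗ[K] (RatFunc2 F)) := finrank_algHom K (RatFunc2 F)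
      _ = finrank K (RatFunc2 F) := Module.finrank_linearMap_self K (RatFunc2 F) (RatFunc2 F)
  have hcard_ge : m * m ≤ Fintype.card ((RatFunc2 F) ≃ₐ[K] (RatFunc2 F)) := by
    have := Fintype.card_le_of_injective e hinj
    simpa using this
  have hcard : Fintype.card ((RatFunc2 F) ≃ₐ[K] (RatFunc2 F)) = finrank K (RatFunc2 F) :=
    le_antisymm hcard_le (hfrle.trans hcard_ge)
  haveI hgal : IsGalois K (RatFunc2 F) := IsGalois.of_card_aut_eq_finrank K (RatFunc2 F) (Nat.card_eq_fintype_card.trans hcard)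
  have hbije : Function.Bijective e :=
    (Fintype.bijective_iff_injective_and_card e).mpr
      ⟨hinj, by rw [hcard]; simp; omega⟩
  -- the trace formula
  have htr : ∀ z : (RatFunc2 F), (Algebra.trace K (RatFunc2 F) z = 0 ↔
      ∑ i ∈ range m, ∑ j ∈ range m, (τx ^ i) ((τy ^ j) z) = 0) := by
    intro z
    have h1 : algebraMap K (RatFunc2 F) (Algebra.trace K (RatFunc2 F) z) = ∑ σ : (RatFunc2 F) ≃ₐ[K] (RatFunc2 F), σ z :=
      trace_eq_sum_automorphisms z
    have h2 : ∑ σ : (RatFunc2 F) ≃ₐ[K] (RatFunc2 F), σ z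
        = ∑ p : Fin m × Fin m, (τx ^ ((p.1 : ℕ))) ((τy ^ ((p.2 : ℕ))) z) :=
      (Fintype.sum_bijective e hbije _ _ (fun p => (he p z).symm)).symm
    have h3 : ∑ p : Fin m × Fin m, (τx ^ ((p.1 : ℕ))) ((τy ^ ((p.2 : ℕ))) z)
        = ∑ i ∈ range m, ∑ j ∈ range m, (τx ^ i) ((τy ^ j) z) := by
      rw [Fintype.sum_prod_type]
      rw [Fin.sum_univ_eq_sum_range (fun i => ∑ j : Fin m, (τx ^ i) ((τy ^ (j : ℕ)) z)) m]
      exact Finset.sum_congr rfl fun i _ =>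
        Fin.sum_univ_eq_sum_range (fun j => (τx ^ i) ((τy ^ j) z)) m
    constructor
    · intro h
      rw [← h3, ← h2, ← h1, h, map_zero]
    · intro h
      apply (algebraMap K (RatFunc2 F)).injective
      rw [h1, h2, h3, h, map_zero]
  -- shift sums
  have hshiftx : ∀ z : (RatFunc2 F), ∑ i ∈ range m, (τx ^ (i + 1)) z = ∑ i ∈ range m, (τx ^ i) z :=
    fun z => sum_shift τx hτxm z
  have hshifty : ∀ z : (RatFunc2 F), ∑ j ∈ range m, (τy ^ (j + 1)) z = ∑ j ∈ range m, (τy ^ j) z :=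
    fun z => sum_shift τy hτym z
  rw [htr f]
  constructor
  · rintro ⟨g, h, rfl⟩
    have hyx : ∀ (j : ℕ) (z : (RatFunc2 F)), (τy ^ j) (τx z) = τx ((τy ^ j) z) := by
      intro j z
      have hc : τy ^ j * τx = τx * τy ^ j := (Commute.pow_left hcomm j).eq
      calc (τy ^ j) (τx z) = ((τy ^ j) * τx) z := rfl
        _ = (τx * (τy ^ j)) z := by rw [hc]
        _ = τx ((τy ^ j) z) := rfl
    have hSg : ∑ i ∈ range m, ∑ j ∈ range m, (τx ^ i) ((τy ^ j) (τx g))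
        = ∑ i ∈ range m, ∑ j ∈ range m, (τx ^ i) ((τy ^ j) g) := by
      calc ∑ i ∈ range m, ∑ j ∈ range m, (τx ^ i) ((τy ^ j) (τx g))
          = ∑ j ∈ range m, ∑ i ∈ range m, (τx ^ (i + 1)) ((τy ^ j) g) := by
            rw [Finset.sum_comm]
            refine Finset.sum_congr rfl fun j _ => Finset.sum_congr rfl fun i _ => ?_
            rw [hyx j g, pow_succ, AlgEquiv.mul_apply]
        _ = ∑ j ∈ range m, ∑ i ∈ range m, (τx ^ i) ((τy ^ j) g) :=
            Finset.sum_congr rfl fun j _ => hshiftx _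
        _ = ∑ i ∈ range m, ∑ j ∈ range m, (τx ^ i) ((τy ^ j) g) := Finset.sum_comm
    have hSh : ∑ i ∈ range m, ∑ j ∈ range m, (τx ^ i) ((τy ^ j) (τy h))
        = ∑ i ∈ range m, ∑ j ∈ range m, (τx ^ i) ((τy ^ j) h) := by
      calc ∑ i ∈ range m, ∑ j ∈ range m, (τx ^ i) ((τy ^ j) (τy h))
          = ∑ i ∈ range m, (τx ^ i) (∑ j ∈ range m, (τy ^ (j + 1)) h) := by
            refine Finset.sum_congr rfl fun i _ => ?_
            rw [map_sum]
            refine Finset.sum_congr rfl fun j _ => ?_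
            rw [pow_succ, AlgEquiv.mul_apply]
        _ = ∑ i ∈ range m, (τx ^ i) (∑ j ∈ range m, (τy ^ j) h) := by rw [hshifty]
        _ = ∑ i ∈ range m, ∑ j ∈ range m, (τx ^ i) ((τy ^ j) h) :=
            Finset.sum_congr rfl fun i _ => map_sum _ _ _
    simp only [map_add, map_sub, Finset.sum_add_distrib, Finset.sum_sub_distrib]
    rw [hSg, hSh]
    ring
  · intro hS
    set u := ∑ j ∈ range m, (τy ^ j) f with hu
    have hu0 : ∑ i ∈ range m, (τx ^ i) u = 0 := by
      rw [hu]
      calc ∑ i ∈ range m, (τx ^ i) (∑ j ∈ range m, (τy ^ j) f)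
          = ∑ i ∈ range m, ∑ j ∈ range m, (τx ^ i) ((τy ^ j) f) :=
            Finset.sum_congr rfl fun i _ => map_sum _ _ _
        _ = 0 := hS
    obtain ⟨b, hb, hbfix⟩ := hilbert_add hm τx u hu0
    have hτyu : τy u = u := by
      rw [hu, map_sum]
      have hstep : ∀ j ∈ range m, τy ((τy ^ j) f) = (τy ^ (j + 1)) f := fun j _ => by
        rw [pow_succ', AlgEquiv.mul_apply]
      rw [Finset.sum_congr rfl hstep]
      exact hshifty f
    have hτyb : τy b = b := hbfix τy hcomm hτyu
    have hmL : (m : (RatFunc2 F)) ≠ 0 := Nat.cast_ne_zero.mpr hm.ne'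
    set g := (m : (RatFunc2 F))⁻¹ * b with hg
    have hτxg : τx g - g = (m : (RatFunc2 F))⁻¹ * u := by
      rw [hg, map_mul, map_inv₀, map_natCast, ← mul_sub, ← hb]
    have hτypowu : ∀ j : ℕ, (τy ^ j) u = u := by
      intro j
      induction j with
      | zero => rfl
      | succ j ih => rw [pow_succ', AlgEquiv.mul_apply, ih, hτyu]
    set f' := f - (τx g - g) with hf'
    have hf'sum : ∑ j ∈ range m, (τy ^ j) f' = 0 := by
      rw [hf']
      have hstep2 : ∀ j ∈ range m,
          (τy ^ j) (f - (τx g - g)) = (τy ^ j) f - (m : (RatFunc2 F))⁻¹ * u := by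
        intro j _
        rw [map_sub, hτxg, map_mul, map_inv₀, map_natCast, hτypowu j]
      rw [Finset.sum_congr rfl hstep2, Finset.sum_sub_distrib, Finset.sum_const, card_range,
        nsmul_eq_mul, ← hu]
      field_simp
      ring
    obtain ⟨b2, hb2, -⟩ := hilbert_add hm τy f' hf'sum
    exact ⟨g, b2, by linear_combination hb2 - hf'⟩
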